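/- arXiv:2202.07324 — 2 statements merged into one kernel-verified Lean document; each statement's English description precedes it below -/
import Mathlib

section
/- Let T, D be 2×2 real matrices, let S = diag(1,-1), and suppose T has real eigenvalues λ₁, λ₂ with |λ₁| < 1 < |λ₂| and eigenvector matrix V (columns are eigenvectors for λ₁, λ₂ respectively, with V invertible). Suppose U₀ ∈ ℝ² satisfies: (i) (-V₂₁, V₁₁)·(D·U₀) = 0 and (ii) (-V₂₁, V₁₁)·(S·U₀) = 0, with U₀ ≠ 0 and (V₁₁, V₂₁) ≠ (0,0). Then U₀ is proportional to (V₁₁, -V₂₁)ᵀ, the sequence w(n) = Tⁿ⁻¹·D·U₀ (n ≥ 1) tends to 0 as n → ∞, and the sequence z(n) = S·T^{-n}·S·U₀ (n ≤ 0) tends to 0 as n → -∞. -/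
lemma aux_prop (a b x y : ℝ) (h : ¬(a = 0 ∧ b = 0)) (hxy : -b * x + a * y = 0) :
    ∃ k : ℝ, x = k * a ∧ y = k * b := by
  by_cases ha : a = 0
  · have hb : b ≠ 0 := fun hb => h ⟨ha, hb⟩
    have hx : x = 0 := by
      have : -b * x = 0 := by rw [ha] at hxy; linarith
      have := mul_eq_zero.mp this
      rcases this with h' | h'
      · exact absurd (by linarith : b = 0) hb
      · exact h'
    exact ⟨y / b, by rw [hx, ha]; ring, by field_simp⟩
  · refine ⟨x / a, by field_simp, ?_⟩
    field_simp
    linarith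

theorem stmt_15 (T D S V : Matrix (Fin 2) (Fin 2) ℝ)
    (hS : S = !![1, 0; 0, -1])
    (lam₁ lam₂ : ℝ) (h₁ : |lam₁| < 1) (h₂ : 1 < |lam₂|)
    (hV : IsUnit V.det)
    (hcol₁ : T.mulVec (fun i => V i 0) = lam₁ • (fun i => V i 0))
    (hcol₂ : T.mulVec (fun i => V i 1) = lam₂ • (fun i => V i 1))
    (U₀ : Fin 2 → ℝ) (hU₀ : U₀ ≠ 0)
    (hVcol : ¬(V 0 0 = 0 ∧ V 1 0 = 0))
    (hi : -(V 1 0) * (D.mulVec U₀ 0) + V 0 0 * (D.mulVec U₀ 1) = 0)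
    (hii : -(V 1 0) * (S.mulVec U₀ 0) + V 0 0 * (S.mulVec U₀ 1) = 0) :
    (∃ c : ℝ, U₀ = c • ![V 0 0, -(V 1 0)]) ∧
    Filter.Tendsto (fun n : ℕ => (T ^ (n - 1)).mulVec (D.mulVec U₀)) Filter.atTop (nhds 0) ∧
    Filter.Tendsto (fun m : ℕ => (S * T ^ m * S).mulVec U₀) Filter.atTop (nhds 0) := by
  set v : Fin 2 → ℝ := fun i => V i 0 with hv
  -- powers of T on the eigenvector
  have hpow : ∀ n : ℕ, (T ^ n).mulVec v = (lam₁ ^ n) • v := by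
    intro n
    induction n with
    | zero => simp [Matrix.mulVec_one]
    | succ n ih =>
      rw [pow_succ, ← Matrix.mulVec_mulVec, hcol₁, Matrix.mulVec_smul, ih, smul_smul,
        pow_succ, mul_comm]
  -- S components
  have hS0 : S.mulVec U₀ 0 = U₀ 0 := by
    simp [hS, Matrix.mulVec, dotProduct, Fin.sum_univ_two]
  have hS1 : S.mulVec U₀ 1 = -U₀ 1 := by
    simp [hS, Matrix.mulVec, dotProduct, Fin.sum_univ_two]
  rw [hS0, hS1] at hii
  obtain ⟨c, hc0, hc1⟩ := aux_prop (V 0 0) (V 1 0) (U₀ 0) (-U₀ 1) hVcol (by linarith)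
  have hU₀eq : U₀ = c • ![V 0 0, -(V 1 0)] := by
    funext i
    fin_cases i
    · simpa using hc0
    · simp only [Pi.smul_apply]
      simp [Matrix.cons_val_one]
      linarith
  have hSU : S.mulVec U₀ = c • v := by
    funext i
    fin_cases i
    · simpa [hS0] using hc0
    · simp only [hS1, Pi.smul_apply, hv]
      simp [hS, Matrix.vecHead, Matrix.vecTail]
      linarith
  obtain ⟨d, hd0, hd1⟩ := aux_prop (V 0 0) (V 1 0) (D.mulVec U₀ 0) (D.mulVec U₀ 1) hVcol hi
  have hDU : D.mulVec U₀ = d • v := by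
    funext i
    fin_cases i
    · simpa using hd0
    · simpa using hd1
  have hpowlim : Filter.Tendsto (fun n : ℕ => lam₁ ^ n) Filter.atTop (nhds 0) :=
    tendsto_pow_atTop_nhds_zero_of_abs_lt_one h₁
  refine ⟨⟨c, hU₀eq⟩, ?_, ?_⟩
  · have key : ∀ n : ℕ, (T ^ (n - 1)).mulVec (D.mulVec U₀) = (lam₁ ^ (n - 1)) • (d • v) := by
      intro n
      rw [hDU, Matrix.mulVec_smul, hpow, smul_comm]
    simp only [key]
    have h0 : Filter.Tendsto (fun m : ℕ => (lam₁ ^ m) • (d • v)) Filter.atTop (nhds 0) := by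
      have := hpowlim.smul_const (d • v)
      simpa using this
    exact h0.comp (Filter.tendsto_sub_atTop_nat 1)
  · have key : ∀ m : ℕ, (S * T ^ m * S).mulVec U₀ = (lam₁ ^ m) • U₀ := by
      intro m
      have hSS : S * S = 1 := by
        rw [hS, Matrix.one_fin_two]
        norm_num [Matrix.mul_fin_two]
      calc (S * T ^ m * S).mulVec U₀
          = S.mulVec ((T ^ m).mulVec (S.mulVec U₀)) := by
            rw [Matrix.mulVec_mulVec, Matrix.mulVec_mulVec, Matrix.mul_assoc]
        _ = S.mulVec ((lam₁ ^ m) • (c • v)) := by rw [hSU, Matrix.mulVec_smul, hpow, smul_comm]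
        _ = (lam₁ ^ m) • S.mulVec (c • v) := by rw [Matrix.mulVec_smul]
        _ = (lam₁ ^ m) • S.mulVec (S.mulVec U₀) := by rw [hSU]
        _ = (lam₁ ^ m) • U₀ := by rw [Matrix.mulVec_mulVec, hSS, Matrix.one_mulVec]
    simp only [key]
    have := hpowlim.smul_const U₀
    simpa using this
end

section
/- Let α > 0 and p, q ∈ ℝ with pq > 0. Suppose f, g : ℝ → ℝ are continuous, twice continuously differentiable on ℝ \ {0}, decay to 0 at ±∞, satisfy f'' = α²f and g'' = α²g on ℝ \ {0}, and have derivative jumps at 0 given by f'(0⁺) - f'(0⁻) = -p·g(0) and g'(0⁺) - g'(0⁻) = -q·f(0), with (f(0), g(0)) ≠ (0,0). Then α = (1/2)·√(pq). -/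
open Set Filter Real

lemma myconst_on (h : ℝ → ℝ) (hd : ∀ x ∈ Set.Ioi (0:ℝ), HasDerivAt h 0 x) :
    ∀ x ∈ Set.Ioi (0:ℝ), ∀ y ∈ Set.Ioi (0:ℝ), h x = h y := by
  have key : ∀ x ∈ Set.Ioi (0:ℝ), ∀ y ∈ Set.Ioi (0:ℝ), x ≤ y → h y = h x := by
    intro x hx y hy hxy
    have hcont : ContinuousOn h (Set.Icc x y) := fun z hz =>
      ((hd z (lt_of_lt_of_le hx hz.1)).continuousAt).continuousWithinAt
    exact constant_of_has_deriv_right_zero hcont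
      (fun z hz => (hd z (lt_of_lt_of_le hx hz.1)).hasDerivWithinAt) y
      (Set.right_mem_Icc.mpr hxy)
  intro x hx y hy
  rcases le_total x y with hxy | hxy
  · exact (key x hx y hy hxy).symm
  · exact key y hy x hx hxy

lemma right_limit (α : ℝ) (hα : 0 < α) (f : ℝ → ℝ) (hfc : Continuous f)
    (hfs : ∀ η : ℝ, η ≠ 0 → ContDiffAt ℝ 2 f η)
    (hfode : ∀ η : ℝ, η ≠ 0 → deriv (deriv f) η = α ^ 2 * f η)
    (hftop : Filter.Tendsto f Filter.atTop (nhds 0))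
    (a : ℝ) (ha : Filter.Tendsto (deriv f) (nhdsWithin 0 (Set.Ioi 0)) (nhds a)) :
    a = -α * f 0 := by
  have hd1 : ∀ η : ℝ, η ≠ 0 → HasDerivAt f (deriv f η) η := fun η hη =>
    ((hfs η hη).differentiableAt (by norm_num)).hasDerivAt
  have hd2 : ∀ η : ℝ, η ≠ 0 → HasDerivAt (deriv f) (α ^ 2 * f η) η := by
    intro η hη
    have h1 : ContDiffAt ℝ 1 (fderiv ℝ f) η := (hfs η hη).fderiv_right (by norm_num)
    have h2 : DifferentiableAt ℝ (fderiv ℝ f) η := h1.differentiableAt (by norm_num)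
    have h3 : DifferentiableAt ℝ (deriv f) η := h2.clm_apply (differentiableAt_const (1:ℝ))
    have h4 := h3.hasDerivAt
    rwa [hfode η hη] at h4
  set u : ℝ → ℝ := fun η => Real.exp (-(α * η)) * (deriv f η + α * f η) with hu_def
  have hu : ∀ x ∈ Set.Ioi (0:ℝ), HasDerivAt u 0 x := by
    intro x hx
    have hx0 : x ≠ 0 := ne_of_gt hx
    have he : HasDerivAt (fun η : ℝ => Real.exp (-(α * η))) (-α * Real.exp (-(α * x))) x := by
      have h0 : HasDerivAt (fun η : ℝ => -(α * η)) (-α) x := by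
        simpa using (hasDerivAt_id x).const_mul (-α)
      simpa [mul_comm] using h0.exp
    have hw : HasDerivAt (fun η => deriv f η + α * f η) (α ^ 2 * f x + α * deriv f x) x :=
      (hd2 x hx0).add ((hd1 x hx0).const_mul α)
    have hmul := he.mul hw
    have h0 : -α * Real.exp (-(α * x)) * (deriv f x + α * f x) +
        Real.exp (-(α * x)) * (α ^ 2 * f x + α * deriv f x) = 0 := by ring
    rw [h0] at hmul
    exact hmul
  have huc := myconst_on u hu
  have hC : ∀ x ∈ Set.Ioi (0:ℝ), deriv f x + α * f x = u 1 * Real.exp (α * x) := by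
    intro x hx
    have h1 : u x = u 1 := huc x hx 1 (by norm_num)
    have h2 : Real.exp (α * x) * u x = Real.exp (α * x) * u 1 := by rw [h1]
    rw [hu_def] at h2
    simp only at h2
    rw [← mul_assoc, ← Real.exp_add] at h2
    simp only [add_neg_cancel, Real.exp_zero, one_mul] at h2
    rw [h2]; ring
  set k : ℝ → ℝ := fun η => Real.exp (α * η) * f η - u 1 / (2*α) * Real.exp (2*α*η) with hk_def
  have hk : ∀ x ∈ Set.Ioi (0:ℝ), HasDerivAt k 0 x := by
    intro x hx
    have hx0 : x ≠ 0 := ne_of_gt hx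
    have he : HasDerivAt (fun η : ℝ => Real.exp (α * η)) (α * Real.exp (α * x)) x := by
      have h0 : HasDerivAt (fun η : ℝ => α * η) α x := by
        simpa using (hasDerivAt_id x).const_mul α
      simpa [mul_comm] using h0.exp
    have he2 : HasDerivAt (fun η : ℝ => u 1 / (2*α) * Real.exp (2*α*η))
        (u 1 / (2*α) * (2*α * Real.exp (2*α*x))) x := by
      have h0 : HasDerivAt (fun η : ℝ => 2*α*η) (2*α) x := by
        simpa using (hasDerivAt_id x).const_mul (2*α)
      exact (by simpa [mul_comm] using h0.exp : HasDerivAt (fun η : ℝ => Real.exp (2*α*η))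
        (2*α * Real.exp (2*α*x)) x).const_mul _
    have hmul := (he.mul (hd1 x hx0)).sub he2
    have hD : α * Real.exp (α * x) * f x + Real.exp (α * x) * deriv f x -
        u 1 / (2*α) * (2*α * Real.exp (2*α*x)) = 0 := by
      have e1 : Real.exp (α*x) * (deriv f x + α * f x) = u 1 * Real.exp (2*α*x) := by
        rw [hC x hx, ← mul_assoc, mul_comm (Real.exp (α*x)) (u 1), mul_assoc, ← Real.exp_add]
        ring_nf
      have e2 : u 1 / (2*α) * (2*α * Real.exp (2*α*x)) = u 1 * Real.exp (2*α*x) := by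
        field_simp
      rw [e2, ← e1]; ring
    rw [hD] at hmul
    exact hmul
  have hkc := myconst_on k hk
  -- C = 0
  have hC0 : u 1 = 0 := by
    have hαx : Filter.Tendsto (fun x : ℝ => α * x) Filter.atTop Filter.atTop :=
      Filter.Tendsto.const_mul_atTop hα Filter.tendsto_id
    have hexp0 : Filter.Tendsto (fun x : ℝ => Real.exp (-(α * x))) Filter.atTop (nhds 0) :=
      Real.tendsto_exp_atBot.comp (tendsto_neg_atTop_atBot.comp hαx)
    have hφ : Filter.Tendsto (fun x : ℝ => u 1 / (2*α) * Real.exp (α*x)) Filter.atTop (nhds 0) := by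
      have h1 : Filter.Tendsto (fun x : ℝ => f x - k 1 * Real.exp (-(α*x)))
          Filter.atTop (nhds 0) := by
        simpa using hftop.sub (hexp0.const_mul (k 1))
      refine h1.congr' ?_
      filter_upwards [Filter.eventually_gt_atTop (0:ℝ)] with x hx
      have h2 : k x = k 1 := hkc x hx 1 (by norm_num)
      rw [hk_def] at h2
      simp only at h2
      -- exp(αx) f x - u1/(2α) exp(2αx) = k 1
      have h3 : Real.exp (α*x) * f x = k 1 + u 1/(2*α) * Real.exp (2*α*x) := by linarith
      have h4 := congrArg (fun t => Real.exp (-(α*x)) * t) h3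
      simp only [mul_add] at h4
      rw [← mul_assoc, ← Real.exp_add, neg_add_cancel, Real.exp_zero, one_mul] at h4
      rw [h4]
      have h5 : Real.exp (-(α*x)) * (u 1/(2*α) * Real.exp (2*α*x))
          = u 1/(2*α) * Real.exp (α*x) := by
        rw [mul_comm (Real.exp (-(α*x))), mul_assoc, ← Real.exp_add]
        ring_nf
      rw [h5]
      ring
    have hprod : Filter.Tendsto (fun x : ℝ => (u 1 / (2*α) * Real.exp (α*x)) * Real.exp (-(α*x)))
        Filter.atTop (nhds 0) := by
      simpa using hφ.mul hexp0
    have hconst : (fun x : ℝ => (u 1 / (2*α) * Real.exp (α*x)) * Real.exp (-(α*x)))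
        = fun _ : ℝ => u 1 / (2*α) := by
      funext x
      rw [mul_assoc, ← Real.exp_add, add_neg_cancel, Real.exp_zero, mul_one]
    rw [hconst] at hprod
    have := tendsto_nhds_unique tendsto_const_nhds hprod
    field_simp at this
    simpa using this
  -- deriv f = -α f on Ioi 0
  have hlim : Filter.Tendsto (fun x => -α * f x) (nhdsWithin 0 (Set.Ioi 0))
      (nhds (-α * f 0)) := ((hfc.tendsto 0).const_mul (-α)).mono_left nhdsWithin_le_nhds
  have heq : deriv f =ᶠ[nhdsWithin (0:ℝ) (Set.Ioi 0)] fun x => -α * f x := by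
    filter_upwards [self_mem_nhdsWithin] with x hx
    have h1 := hC x hx
    rw [hC0, zero_mul] at h1
    linarith
  exact tendsto_nhds_unique ha (hlim.congr' heq.symm)

lemma left_limit (α : ℝ) (hα : 0 < α) (f : ℝ → ℝ) (hfc : Continuous f)
    (hfs : ∀ η : ℝ, η ≠ 0 → ContDiffAt ℝ 2 f η)
    (hfode : ∀ η : ℝ, η ≠ 0 → deriv (deriv f) η = α ^ 2 * f η)
    (hfbot : Filter.Tendsto f Filter.atBot (nhds 0))
    (b : ℝ) (hb : Filter.Tendsto (deriv f) (nhdsWithin 0 (Set.Iio 0)) (nhds b)) :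
    b = α * f 0 := by
  set F : ℝ → ℝ := fun x => f (-x) with hF_def
  have hFderiv : deriv F = fun x => -deriv f (-x) := by
    funext x
    exact deriv_comp_neg f x
  have hneg : Filter.Tendsto (fun x : ℝ => -x) (nhdsWithin (0:ℝ) (Set.Ioi 0))
      (nhdsWithin (0:ℝ) (Set.Iio 0)) := by
    have h1 : Filter.Tendsto (fun x : ℝ => -x) (nhdsWithin (0:ℝ) (Set.Ioi 0))
        (nhdsWithin (-0:ℝ) (Set.Iio 0)) :=
      (continuous_neg.continuousWithinAt).tendsto_nhdsWithin
        (fun x hx => by simpa using hx)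
    simpa using h1
  have key := right_limit α hα F (hfc.comp continuous_neg)
    (fun η hη => ContDiffAt.comp η (hfs (-η) (neg_ne_zero.mpr hη)) (contDiff_neg.contDiffAt))
    (by
      intro η hη
      rw [hFderiv]
      have h1 : deriv (fun x => -deriv f (-x)) η = -deriv (fun x => deriv f (-x)) η := by
        exact deriv.neg
      rw [h1, deriv_comp_neg (deriv f) η, neg_neg, hfode (-η) (neg_ne_zero.mpr hη)])
    (hfbot.comp tendsto_neg_atTop_atBot)
    (-b)
    (by
      rw [hFderiv]
      exact (hb.comp hneg).neg)
  have : F 0 = f 0 := by simp [hF_def]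
  rw [this] at key
  linarith

theorem stmt_18 (α p q : ℝ) (hα : α > 0) (hpq : p * q > 0)
    (f g : ℝ → ℝ)
    (hfc : Continuous f) (hgc : Continuous g)
    (hfs : ∀ η : ℝ, η ≠ 0 → ContDiffAt ℝ 2 f η)
    (hgs : ∀ η : ℝ, η ≠ 0 → ContDiffAt ℝ 2 g η)
    (hfode : ∀ η : ℝ, η ≠ 0 → deriv (deriv f) η = α ^ 2 * f η)
    (hgode : ∀ η : ℝ, η ≠ 0 → deriv (deriv g) η = α ^ 2 * g η)
    (hftop : Filter.Tendsto f Filter.atTop (nhds 0))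
    (hfbot : Filter.Tendsto f Filter.atBot (nhds 0))
    (hgtop : Filter.Tendsto g Filter.atTop (nhds 0))
    (hgbot : Filter.Tendsto g Filter.atBot (nhds 0))
    (af bf ag bg : ℝ)
    (hfr : Filter.Tendsto (deriv f) (nhdsWithin 0 (Set.Ioi 0)) (nhds af))
    (hfl : Filter.Tendsto (deriv f) (nhdsWithin 0 (Set.Iio 0)) (nhds bf))
    (hgr : Filter.Tendsto (deriv g) (nhdsWithin 0 (Set.Ioi 0)) (nhds ag))
    (hgl : Filter.Tendsto (deriv g) (nhdsWithin 0 (Set.Iio 0)) (nhds bg))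
    (hjf : af - bf = -p * g 0)
    (hjg : ag - bg = -q * f 0)
    (hne : ¬(f 0 = 0 ∧ g 0 = 0)) :
    α = (1 / 2) * Real.sqrt (p * q) := by
  have haf : af = -α * f 0 := right_limit α hα f hfc hfs hfode hftop af hfr
  have hbf : bf = α * f 0 := left_limit α hα f hfc hfs hfode hfbot bf hfl
  have hag : ag = -α * g 0 := right_limit α hα g hgc hgs hgode hgtop ag hgr
  have hbg : bg = α * g 0 := left_limit α hα g hgc hgs hgode hgbot bg hgl
  have h1 : 2 * α * f 0 = p * g 0 := by
    rw [haf, hbf] at hjf; linarith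
  have h2 : 2 * α * g 0 = q * f 0 := by
    rw [hag, hbg] at hjg; linarith
  have hp : p ≠ 0 := by
    intro h; rw [h, zero_mul] at hpq; exact lt_irrefl 0 hpq
  have hq : q ≠ 0 := by
    intro h; rw [h, mul_zero] at hpq; exact lt_irrefl 0 hpq
  have h2α : (2:ℝ) * α ≠ 0 := by positivity
  have hf0 : f 0 ≠ 0 := by
    intro h
    have hz : 2 * α * g 0 = 0 := by rw [h2, h, mul_zero]
    exact hne ⟨h, (mul_eq_zero.mp hz).resolve_left h2α⟩
  have hg0 : g 0 ≠ 0 := by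
    intro h
    have hz : 2 * α * f 0 = 0 := by rw [h1, h, mul_zero]
    exact hne ⟨(mul_eq_zero.mp hz).resolve_left h2α, h⟩
  have hmul : (4 * α ^ 2 - p * q) * (f 0 * g 0) = 0 := by
    linear_combination (2 * α * g 0) * h1 + (p * g 0) * h2
  have h4 : p * q = (2 * α) ^ 2 := by
    have := mul_eq_zero.mp hmul
    rcases this with h' | h'
    · nlinarith
    · exact absurd h' (mul_ne_zero hf0 hg0)
  rw [h4, Real.sqrt_sq (by positivity)]
  ring
end
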